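/- Let Ω be a semigroup, A a vector space over a field k, and (*_{α,β})_{α,β∈Ω} a family of bilinear maps A⊗A→A satisfying the Ω-associativity law (a *_{α,β} b) *_{αβ,γ} c = a *_{α,βγ} (b *_{β,γ} c). Then the space A⊗k[Ω] with product (x⊗α)*(y⊗β) = (x *_{α,β} y)⊗(αβ) is an associative algebra. Conversely, if this product on A⊗k[Ω] is associative, then the family (*_{α,β}) satisfies the Ω-associativity law. -/

import Mathlib

open TensorProduct

/-- The product `(x⊗α)*(y⊗β) = (x *_{α,β} y)⊗(αβ)` on `A ⊗ k[Ω]` is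
associative if and only if the family `(*_{α,β})` satisfies the Ω-associativity law. -/
theorem omega_assoc_iff_tensor_assoc
    {k Ω A : Type*} [Field k] [Semigroup Ω] [AddCommGroup A] [Module k A]
    (mul : Ω → Ω → A →ₗ[k] A →ₗ[k] A)
    (mulB : TensorProduct k A (MonoidAlgebra k Ω) →ₗ[k]
      TensorProduct k A (MonoidAlgebra k Ω) →ₗ[k] TensorProduct k A (MonoidAlgebra k Ω))
    (hdef : ∀ (α β : Ω) (x y : A),
      mulB (x ⊗ₜ[k] MonoidAlgebra.single α 1) (y ⊗ₜ[k] MonoidAlgebra.single β 1)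
        = (mul α β x y) ⊗ₜ[k] MonoidAlgebra.single (α * β) 1) :
    (∀ u v w : TensorProduct k A (MonoidAlgebra k Ω),
        mulB (mulB u v) w = mulB u (mulB v w))
      ↔ (∀ (α β γ : Ω) (x y z : A),
        mul (α * β) γ (mul α β x y) z = mul α (β * γ) x (mul β γ y z)) := by
  constructor
  · intro h α β γ x y z
    have := h (x ⊗ₜ MonoidAlgebra.single α 1) (y ⊗ₜ MonoidAlgebra.single β 1)
      (z ⊗ₜ MonoidAlgebra.single γ 1)
    rw [hdef, hdef, hdef, hdef] at this
    rw [mul_assoc] at this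
    -- injectivity: apply (rid) ∘ lTensor lapply
    have hcoef : ∀ (ω : Ω) (a b : A),
        a ⊗ₜ[k] (MonoidAlgebra.single ω 1 : MonoidAlgebra k Ω)
          = b ⊗ₜ[k] MonoidAlgebra.single ω 1 → a = b := by
      intro ω a b hab
      have := congrArg
        ((TensorProduct.rid k A).toLinearMap.comp
          (LinearMap.lTensor A (Finsupp.lapply ω ∘ₗ (MonoidAlgebra.coeffLinearEquiv k).toLinearMap : MonoidAlgebra k Ω →ₗ[k] k))) hab
      simpa [MonoidAlgebra.coeff_single, Finsupp.single_eq_same] using this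
    exact hcoef _ _ _ this
  · intro h u v w
    set S : Set (TensorProduct k A (MonoidAlgebra k Ω)) :=
      {t | ∃ (x : A) (α : Ω), t = x ⊗ₜ[k] MonoidAlgebra.single α 1}
    have hspan : ∀ t : TensorProduct k A (MonoidAlgebra k Ω), t ∈ Submodule.span k S := by
      intro t
      induction t with
      | zero => exact Submodule.zero_mem _
      | add a b ha hb => exact Submodule.add_mem _ ha hb
      | tmul x f =>
        induction f using MonoidAlgebra.induction with
        | zero => simp
        | single_add a b f _ _ hf =>
          rw [TensorProduct.tmul_add]
          refine Submodule.add_mem _ ?_ hf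
          have : x ⊗ₜ[k] (MonoidAlgebra.single a b : MonoidAlgebra k Ω)
              = (b • x) ⊗ₜ[k] (MonoidAlgebra.single a 1 : MonoidAlgebra k Ω) := by
            rw [TensorProduct.smul_tmul, MonoidAlgebra.smul_single', mul_one]
          rw [this]
          exact Submodule.subset_span ⟨b • x, a, rfl⟩
    refine Submodule.span_induction (p := fun u _ =>
        mulB (mulB u v) w = mulB u (mulB v w)) ?_ ?_ ?_ ?_ (hspan u)
    · rintro u' ⟨x, α, rfl⟩
      refine Submodule.span_induction (p := fun v _ => ∀ w,
          mulB (mulB (x ⊗ₜ[k] MonoidAlgebra.single α 1) v) w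
            = mulB (x ⊗ₜ[k] MonoidAlgebra.single α 1) (mulB v w)) ?_ ?_ ?_ ?_ (hspan v) w
      · rintro v' ⟨y, β, rfl⟩ w
        refine Submodule.span_induction (p := fun w _ =>
            mulB (mulB (x ⊗ₜ[k] MonoidAlgebra.single α 1) (y ⊗ₜ[k] MonoidAlgebra.single β 1)) w
              = mulB (x ⊗ₜ[k] MonoidAlgebra.single α 1)
                  (mulB (y ⊗ₜ[k] MonoidAlgebra.single β 1) w)) ?_ ?_ ?_ ?_ (hspan w)
        · rintro w' ⟨z, γ, rfl⟩
          rw [hdef, hdef, hdef, hdef, h, mul_assoc]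
        · simp
        · intro a b _ _ ha hb; simp [ha, hb]
        · intro c a _ ha; simp [ha]
      · intro w; simp
      · intro a b _ _ ha hb w; simp [ha w, hb w]
      · intro c a _ ha w; simp [ha w]
    · simp
    · intro a b _ _ ha hb; simp [map_add, ha, hb]
    · intro c a _ ha; simp [ha]
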